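/- In the fresh-place construction for the always-occurs check: any occurrence sequence of S' = (P ∪ {p'}, T, F ∪ {(p',t)}, λ, M ⊎ [p']) that leads to the marking [p', o] is, when regarded as a transition sequence, an execution of S that does not contain t; conversely, any execution of S not containing t is an occurrence sequence of S' leading to [p', o]. -/

import Mathlib

/-- A Petri net (system) over places `P` and transitions `T`: for each transition its
preset (input places), postset (output places), and a label. -/
structure PetriNet (P T : Type) where
  pre : T → Finset P
  post : T → Finset P
  lab : T → String

/-- A transition is enabled at marking `M` iff every input place holds at least one token. -/
def Enabled {P T : Type} (N : PetriNet P T) (M : Multiset P) (t : T) : Prop :=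
  ∀ p ∈ N.pre t, p ∈ M

/-- Firing `t` consumes one token from each input place and produces one on each output place. -/
def fire {P T : Type} [DecidableEq P] (N : PetriNet P T) (M : Multiset P) (t : T) :
    Multiset P :=
  M - (N.pre t).val + (N.post t).val

/-- `OccSeq N M σ M'`: `σ` is an occurrence sequence of `N` leading from marking `M`
to marking `M'`. -/
inductive OccSeq {P T : Type} [DecidableEq P] (N : PetriNet P T) :
    Multiset P → List T → Multiset P → Prop
  | nil (M : Multiset P) : OccSeq N M [] M
  | cons {M M' : Multiset P} {t : T} {ts : List T} :
      Enabled N M t → OccSeq N (fire N M t) ts M' → OccSeq N M (t :: ts) M'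

/-- The net `S'`: a fresh place `p' = none` is added as an extra input place of
transition `t` (arc `(p', t)`), with one extra initial token on `p'`. -/
def extendAlwaysOccurs {P T : Type} [DecidableEq P] [DecidableEq T]
    (N : PetriNet P T) (t : T) : PetriNet (Option P) T where
  pre := fun u =>
    if u = t then insert none ((N.pre u).image some) else (N.pre u).image some
  post := fun u => (N.post u).image some
  lab := N.lab

set_option linter.unusedSectionVars false

section Aux
variable {P T : Type} [DecidableEq P] [DecidableEq T] (N : PetriNet P T) (t : T)

lemma image_some_val (s : Finset P) : (s.image some).val = s.val.map some := by
  rw [Finset.image_val, Multiset.dedup_eq_self.2 (s.nodup.map (Option.some_injective _))]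

lemma count_none_post (u : T) :
    ((extendAlwaysOccurs N t).post u).val.count none = 0 := by
  simp [extendAlwaysOccurs, image_some_val, Multiset.count_eq_zero]

lemma count_none_mono {M0 M1 : Multiset (Option P)} {σ : List T}
    (h : OccSeq (extendAlwaysOccurs N t) M0 σ M1) :
    M1.count none ≤ M0.count none := by
  induction h with
  | nil => exact le_rfl
  | cons hen _ ih =>
    refine ih.trans ?_
    simp only [fire, Multiset.count_add, Multiset.count_sub, count_none_post]
    omega

lemma enabled_iff {u : T} (hu : u ≠ t) (M : Multiset P) :
    Enabled (extendAlwaysOccurs N t) (M.map some + {none}) u ↔ Enabled N M u := by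
  simp [Enabled, extendAlwaysOccurs, hu, Multiset.mem_map]

lemma fire_eq {u : T} (hu : u ≠ t) (M : Multiset P) :
    fire (extendAlwaysOccurs N t) (M.map some + {none}) u
      = (fire N M u).map some + {none} := by
  ext a
  have hc : ∀ (s : Multiset P) (a : Option P),
      (s.map some).count a = Option.rec 0 s.count a := by
    rintro s (_ | p)
    · simp [Multiset.count_eq_zero]
    · exact Multiset.count_map_eq_count' some s (Option.some_injective _) p
  simp only [fire, extendAlwaysOccurs, if_neg hu, image_some_val,
    Multiset.count_add, Multiset.count_sub, hc]
  cases a <;> simp [hc]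

lemma final_eq (o : P) : ({none, some o} : Multiset (Option P))
    = ({o} : Multiset P).map some + {none} := by
  rw [Multiset.map_singleton, Multiset.singleton_add]
  exact Multiset.cons_swap _ _ _

lemma occseq_nil {M0 M1 : Multiset (Option P)}
    (h : OccSeq (extendAlwaysOccurs N t) M0 [] M1) : M0 = M1 := by
  cases h; rfl

end Aux

/-- Any occurrence sequence of `S'` from `M ⊎ [p']` to `[p', o]` is an execution of `S`
not containing `t`; conversely, any execution of `S` not containing `t` is such an
occurrence sequence of `S'`. -/
theorem extendAlwaysOccurs_occSeq_characterization {P T : Type} [DecidableEq P]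
    [DecidableEq T] (N : PetriNet P T) (M : Multiset P) (o : P) (t : T) :
    (∀ σ : List T,
        OccSeq (extendAlwaysOccurs N t) (M.map some + {none}) σ
          ({none, some o} : Multiset (Option P)) →
        OccSeq N M σ {o} ∧ t ∉ σ) ∧
    (∀ σ : List T, OccSeq N M σ {o} → t ∉ σ →
        OccSeq (extendAlwaysOccurs N t) (M.map some + {none}) σ
          ({none, some o} : Multiset (Option P))) := by
  have key : ∀ (M' M'' : Multiset P),
      (M'.map some + {none} : Multiset (Option P)) = M''.map some + {none} → M' = M'' := by
    intro M' M'' h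
    exact Multiset.map_injective (Option.some_injective _) (add_right_cancel h)
  constructor
  · intro σ
    induction σ generalizing M with
    | nil =>
      intro h
      have h := occseq_nil N t h
      rw [final_eq] at h
      rw [key _ _ h]
      exact ⟨OccSeq.nil _, by simp⟩
    | cons u ts ih =>
      intro h
      cases h with
      | cons hen hrest =>
        by_cases hu : u = t
        · exfalso
          subst hu
          have h1 := count_none_mono N u hrest
          have h0 : (fire (extendAlwaysOccurs N u) (M.map some + {none}) u).count none = 0 := by
            have : ((extendAlwaysOccurs N u).pre u).val.count none = 1 := by
              simp [extendAlwaysOccurs, image_some_val,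
                Multiset.count_eq_zero, Multiset.count_cons]
            simp only [fire, Multiset.count_add, Multiset.count_sub, this,
              count_none_post]
            simp [Multiset.count_eq_zero]
          rw [h0] at h1
          simp [Multiset.count_cons] at h1
        · rw [fire_eq N t hu] at hrest
          obtain ⟨h1, h2⟩ := ih (fire N M u) hrest
          refine ⟨OccSeq.cons ((enabled_iff N t hu M).mp hen) h1, fun hm => ?_⟩
          rcases List.mem_cons.mp hm with h | h
          exacts [hu h.symm, h2 h]
  · intro σ h hnot
    induction σ generalizing M with
    | nil =>
      cases h
      exact final_eq o ▸ OccSeq.nil _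
    | cons u ts ih =>
      cases h with
      | cons hen hrest =>
        have hu : u ≠ t := fun he => hnot (he ▸ (List.mem_cons_self : u ∈ u :: ts))
        exact OccSeq.cons ((enabled_iff N t hu M).mpr hen)
          (fire_eq N t hu M ▸ ih (fire N M u) hrest (fun ht => hnot (List.mem_cons_of_mem _ ht)))
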